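/- Fix real numbers 0 < z2 < z3. The function h(z1) = z1*z2*log(z2/z1) - z1*z3*log(z3/z1) + z2*z3*log(z3/z2) is strictly decreasing in z1 on the interval (0, z2), and h(z2) = 0; consequently h(z1) > 0 for all z1 in (0, z2). -/

import Mathlib

open Real Set

theorem stmt_7 (z2 z3 : ℝ) (hz2 : 0 < z2) (hz23 : z2 < z3) :
    StrictAntiOn
      (fun z1 : ℝ => z1 * z2 * Real.log (z2 / z1) - z1 * z3 * Real.log (z3 / z1)
        + z2 * z3 * Real.log (z3 / z2)) (Set.Ioo 0 z2)
    ∧ (z2 * z2 * Real.log (z2 / z2) - z2 * z3 * Real.log (z3 / z2)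
        + z2 * z3 * Real.log (z3 / z2) = 0)
    ∧ ∀ z1 ∈ Set.Ioo 0 z2,
        z1 * z2 * Real.log (z2 / z1) - z1 * z3 * Real.log (z3 / z1)
          + z2 * z3 * Real.log (z3 / z2) > 0 := by
  have hz3 : 0 < z3 := hz2.trans hz23
  set f : ℝ → ℝ := fun z1 : ℝ => z1 * z2 * Real.log (z2 / z1)
      - z1 * z3 * Real.log (z3 / z1) + z2 * z3 * Real.log (z3 / z2) with hf
  -- derivative
  have hderiv : ∀ x ∈ Set.Ioo (0:ℝ) z2,
      HasDerivAt f (z2 * Real.log (z2 / x) - z3 * Real.log (z3 / x) + (z3 - z2)) x := by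
    intro x hx
    have hx0 : (0:ℝ) < x := hx.1
    have hlog : ∀ c : ℝ, 0 < c → HasDerivAt (fun z => Real.log (c / z)) (-x⁻¹) x := by
      intro c hc
      have h0 : HasDerivAt (fun z => Real.log c - Real.log z) (-x⁻¹) x :=
        (Real.hasDerivAt_log hx0.ne').const_sub _
      refine h0.congr_of_eventuallyEq ?_
      filter_upwards [eventually_ne_nhds hx0.ne'] with z hz
      rw [Real.log_div hc.ne' hz]
    have h2 : HasDerivAt (fun z => z * z2 * Real.log (z2 / z))
        (1 * z2 * Real.log (z2 / x) + x * z2 * (-x⁻¹)) x :=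
      ((hasDerivAt_id x).mul_const z2).mul (hlog z2 hz2)
    have h3 : HasDerivAt (fun z => z * z3 * Real.log (z3 / z))
        (1 * z3 * Real.log (z3 / x) + x * z3 * (-x⁻¹)) x :=
      ((hasDerivAt_id x).mul_const z3).mul (hlog z3 hz3)
    have := (h2.sub h3).add_const (z2 * z3 * Real.log (z3 / z2))
    refine HasDerivAt.congr_deriv (f := f) this ?_
    have hxx : x * x⁻¹ = 1 := mul_inv_cancel₀ hx0.ne'
    linear_combination (z3 - z2) * hxx
  -- derivative negative on Ioo 0 z2
  have hneg : ∀ x ∈ Set.Ioo (0:ℝ) z2,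
      z2 * Real.log (z2 / x) - z3 * Real.log (z3 / x) + (z3 - z2) < 0 := by
    intro x hx
    have hx0 : (0:ℝ) < x := hx.1
    have hlog23 : Real.log (z2 / z3) < z2 / z3 - 1 :=
      Real.log_lt_sub_one_of_pos (by positivity) (by
        intro h
        have : z2 = z3 := by field_simp at h; linarith
        linarith)
    have e2 : Real.log (z2 / x) = Real.log z2 - Real.log x := Real.log_div hz2.ne' hx0.ne'
    have e3 : Real.log (z3 / x) = Real.log z3 - Real.log x := Real.log_div hz3.ne' hx0.ne'
    have e23 : Real.log (z2 / z3) = Real.log z2 - Real.log z3 := Real.log_div hz2.ne' hz3.ne'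
    have hlt : Real.log x < Real.log z2 := Real.log_lt_log hx0 hx.2
    rw [e2, e3]
    -- z2*(log z2 - log x) - z3*(log z3 - log x) + (z3 - z2)
    -- = (z3-z2)*log x + z2 log z2 - z3 log z3 + z3 - z2 < value at x = z2
    have key : z3 * (Real.log z2 - Real.log z3) + (z3 - z2) < 0 := by
      have : z3 * Real.log (z2 / z3) < z3 * (z2 / z3 - 1) :=
        (mul_lt_mul_iff_right₀ hz3).2 hlog23
      rw [e23] at this
      have h' : z3 * (z2 / z3 - 1) = z2 - z3 := by field_simp
      nlinarith
    nlinarith [mul_lt_mul_of_pos_left hlt (sub_pos.2 hz23)]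
  -- strict anti on Ioc 0 z2
  have hcont : ContinuousOn f (Set.Ioc 0 z2) := by
    have hne : ∀ z ∈ Set.Ioc (0:ℝ) z2, z ≠ 0 := fun z hz => hz.1.ne'
    apply ContinuousOn.add
    apply ContinuousOn.sub
    · exact (continuousOn_id.mul continuousOn_const).mul
        ((continuousOn_const.div continuousOn_id hne).log
          (fun z hz => div_ne_zero hz2.ne' (hne z hz)))
    · exact (continuousOn_id.mul continuousOn_const).mul
        ((continuousOn_const.div continuousOn_id hne).log
          (fun z hz => div_ne_zero hz3.ne' (hne z hz)))
    · exact continuousOn_const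
  have hanti : StrictAntiOn f (Set.Ioc 0 z2) := by
    apply strictAntiOn_of_deriv_neg (convex_Ioc 0 z2) hcont
    intro x hx
    rw [interior_Ioc] at hx
    rw [(hderiv x hx).deriv]
    exact hneg x hx
  have hval : f z2 = 0 := by
    simp [hf, div_self hz2.ne', Real.log_one]
  refine ⟨hanti.mono (Set.Ioo_subset_Ioc_self), by
    have := hval
    simp only [hf] at this
    linarith, ?_⟩
  intro z1 hz1
  have := hanti ⟨hz1.1, hz1.2.le⟩ ⟨hz2, le_refl z2⟩ hz1.2
  rw [hval] at this
  simpa [hf] using this
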